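/- The minimum Steiner-flow cost satisfies the triangle-type inequality along shortest paths: δ(v, S) ≤ dist(v, u) · max_{d∈S} x(d) + δ(u, S) for all nodes u, v, where dist denotes weighted shortest-path distance. -/

import Mathlib

namespace OST

variable {V : Type} [DecidableEq V]

/-- A feasible flow for the outflow-constrained minimum flow problem. -/
structure Feasible (E : V → V → Prop) (s : V) (D : Set V) (x : V → ℝ)
    (f : V → V → ℝ) : Prop where
  nonneg : ∀ i j, 0 ≤ f i j
  support : ∀ i j, ¬ E i j → f i j = 0
  /-- at every non-source node, every outflow value is bounded by some inflow value
      (max outflow ≤ max inflow) -/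
  conserve : ∀ i, i ≠ s → ∀ j, ∃ k, f i j ≤ f k i
  /-- every destination receives inflow at least its demand -/
  demand : ∀ d ∈ D, ∃ i, x d ≤ f i d

/-- Total weighted cost of a flow. -/
noncomputable def cost [Fintype V] (e f : V → V → ℝ) : ℝ :=
  ∑ i, ∑ j, e i j * f i j

/-- The (undirected) flow-carrying edge relation. -/
def carry (f : V → V → ℝ) (a b : V) : Prop := 0 < f a b ∨ 0 < f b a

/-- Directed reachability inside a set of directed edges. -/
def reach (T : Set (V × V)) (a b : V) : Prop :=
  Relation.ReflTransGen (fun p q => (p, q) ∈ T) a b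

/-- `T` is a tree rooted at `v`, edges directed away from the root. -/
structure IsRootedTree (E : V → V → Prop) (v : V) (T : Set (V × V)) : Prop where
  edges : ∀ p ∈ T, E p.1 p.2
  parent_unique : ∀ u u' w, (u, w) ∈ T → (u', w) ∈ T → u = u'
  root_no_parent : ∀ u, (u, v) ∉ T
  reach_root : ∀ p ∈ T, reach T v p.1

/-- The rooted edge set `T` connects `v` to every node of `S`. -/
def Spans (T : Set (V × V)) (v : V) (S : Set V) : Prop := ∀ d ∈ S, reach T v d

/-- Maximum demand among destinations of `S` lying below node `w` in `T`
    (`0` if there are none, by convention of `sSup` on `ℝ`). -/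
noncomputable def maxBelow (T : Set (V × V)) (S : Set V) (x : V → ℝ) (w : V) : ℝ :=
  sSup (x '' {d ∈ S | reach T w d})

/-- Steiner-flow cost of a rooted tree: each edge is charged its weight times the
    maximum demand among destinations of `S` below it. -/
noncomputable def treeCost (e : V → V → ℝ) (x : V → ℝ) (S : Set V)
    (T : Finset (V × V)) : ℝ :=
  ∑ p ∈ T, e p.1 p.2 * maxBelow (↑T) S x p.2

/-- Minimum Steiner-flow cost from root `v` to destination set `S`. -/
noncomputable def delta (E : V → V → Prop) (e : V → V → ℝ) (x : V → ℝ)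
    (v : V) (S : Set V) : ℝ :=
  sInf {c | ∃ T : Finset (V × V),
    IsRootedTree E v ↑T ∧ Spans (↑T) v S ∧ c = treeCost e x S T}

/-- `l` lists the successive vertices of a walk starting at the given vertex. -/
def IsWalk (R : V → V → Prop) : V → List V → Prop
  | _, [] => True
  | a, b :: l => R a b ∧ IsWalk R b l

/-- Total edge weight of a walk. -/
noncomputable def walkCost (e : V → V → ℝ) : V → List V → ℝ
  | _, [] => 0
  | a, b :: l => e a b + walkCost e b l

/-- Weighted shortest-path distance. -/
noncomputable def dist (E : V → V → Prop) (e : V → V → ℝ) (a b : V) : ℝ :=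
  sInf {c | ∃ l : List V, IsWalk E a l ∧
    (a :: l).getLast (List.cons_ne_nil a l) = b ∧ c = walkCost e a l}

/-- Hop distance in a directed relation. -/
noncomputable def hopDist (R : V → V → Prop) (a b : V) : ℕ :=
  sInf {n | ∃ l : List V, IsWalk R a l ∧
    (a :: l).getLast (List.cons_ne_nil a l) = b ∧ l.length = n}

/-- A feasible flow supported on the rooted tree `T`. -/
structure TreeFeasible (T : Set (V × V)) (D : Set V) (x : V → ℝ)
    (f : V → V → ℝ) : Prop where
  nonneg : ∀ i j, 0 ≤ f i j
  support : ∀ i j, (i, j) ∉ T → f i j = 0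
  /-- flow is nonincreasing away from the root -/
  mono : ∀ u w z, (u, w) ∈ T → (w, z) ∈ T → f w z ≤ f u w
  /-- each destination's parent edge carries at least its demand -/
  demand : ∀ d ∈ D, ∀ u, (u, d) ∈ T → x d ≤ f u d


section Aux

variable {E : V → V → Prop} {e : V → V → ℝ}

lemma getLast_congr {l l' : List V} (h : l = l') (h1 : l ≠ []) (h2 : l' ≠ []) :
    l.getLast h1 = l'.getLast h2 := by subst h; rfl

lemma getLast_mid (a b : V) (l1 l2 : List V) :
    (a :: (l1 ++ b :: l2)).getLast (List.cons_ne_nil _ _) =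
      (b :: l2).getLast (List.cons_ne_nil _ _) := by
  calc (a :: (l1 ++ b :: l2)).getLast (List.cons_ne_nil _ _)
      = ((a :: l1) ++ (b :: l2)).getLast (by simp) :=
        getLast_congr (by simp) _ _
    _ = (b :: l2).getLast (List.cons_ne_nil _ _) :=
        List.getLast_append_of_ne_nil _ _

lemma isWalk_suffix : ∀ (l1 : List V) (a b : V) (l2 : List V),
    IsWalk E a (l1 ++ b :: l2) → IsWalk E b l2 := by
  intro l1
  induction l1 with
  | nil => intro a b l2 hw; exact hw.2
  | cons c t ih => intro a b l2 hw; exact ih c b l2 hw.2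

lemma walkCost_suffix_le (he : ∀ i j, E i j → 0 ≤ e i j) :
    ∀ (l1 : List V) (a b : V) (l2 : List V), IsWalk E a (l1 ++ b :: l2) →
      walkCost e b l2 ≤ walkCost e a (l1 ++ b :: l2) := by
  intro l1
  induction l1 with
  | nil =>
    intro a b l2 hw
    have h1 := he a b hw.1
    show walkCost e b l2 ≤ e a b + walkCost e b l2
    linarith
  | cons c t ih =>
    intro a b l2 hw
    have h1 := he a c hw.1
    have h2 := ih c b l2 hw.2
    show walkCost e b l2 ≤ e a c + walkCost e c (t ++ b :: l2)
    linarith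

lemma walkCost_nonneg (he : ∀ i j, E i j → 0 ≤ e i j) :
    ∀ (l : List V) (a : V), IsWalk E a l → 0 ≤ walkCost e a l := by
  intro l
  induction l with
  | nil => intro a _; exact le_refl 0
  | cons b t ih =>
    intro a hw
    have h1 := he a b hw.1
    have h2 := ih b hw.2
    show 0 ≤ e a b + walkCost e b t
    linarith

lemma exists_nodup_walk (he : ∀ i j, E i j → 0 ≤ e i j) :
    ∀ (n : ℕ) (a : V) (l : List V), l.length ≤ n → IsWalk E a l →
    ∃ l', IsWalk E a l' ∧
      (a :: l').getLast (List.cons_ne_nil _ _) = (a :: l).getLast (List.cons_ne_nil _ _) ∧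
      (a :: l').Nodup ∧ (∀ y ∈ l', y ∈ l) ∧ walkCost e a l' ≤ walkCost e a l := by
  intro n
  induction n with
  | zero =>
    intro a l hlen hw
    have : l = [] := List.length_eq_zero_iff.1 (Nat.le_zero.1 hlen)
    subst this
    exact ⟨[], trivial, rfl, by simp, by simp, le_refl _⟩
  | succ n ih =>
    intro a l hlen hw
    by_cases ha : a ∈ l
    · obtain ⟨l1, l2, rfl⟩ := List.append_of_mem ha
      have hw2 : IsWalk E a l2 := isWalk_suffix l1 a a l2 hw
      have hlen2 : l2.length ≤ n := by
        simp [List.length_append] at hlen; omega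
      obtain ⟨l', w', g', nd', sub', c'⟩ := ih a l2 hlen2 hw2
      refine ⟨l', w', ?_, nd', ?_, ?_⟩
      · rw [g']; exact (getLast_mid a a l1 l2).symm
      · intro y hy
        have := sub' y hy
        simp [this]
      · exact c'.trans (walkCost_suffix_le he l1 a a l2 hw)
    · cases l with
      | nil => exact ⟨[], trivial, rfl, by simp, by simp, le_refl _⟩
      | cons b t =>
        obtain ⟨hab, hw'⟩ := hw
        have hlen' : t.length ≤ n := by simp at hlen; omega
        obtain ⟨l', w', g', nd', sub', c'⟩ := ih b t hlen' hw'
        refine ⟨b :: l', ⟨hab, w'⟩, ?_, ?_, ?_, ?_⟩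
        · rw [List.getLast_cons (List.cons_ne_nil b l'),
            List.getLast_cons (List.cons_ne_nil b t)]
          exact g'
        · rw [List.nodup_cons]
          refine ⟨?_, nd'⟩
          intro hmem
          rcases List.mem_cons.1 hmem with rfl | hmem'
          · exact ha (List.mem_cons_self)
          · exact ha (List.mem_cons_of_mem _ (sub' a hmem'))
        · intro y hy
          rcases List.mem_cons.1 hy with rfl | hy'
          · exact List.mem_cons_self
          · exact List.mem_cons_of_mem _ (sub' y hy')
        · have : walkCost e a (b :: l') = e a b + walkCost e b l' := rfl
          have h2 : walkCost e a (b :: t) = e a b + walkCost e b t := rfl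
          rw [this, h2]
          linarith

lemma exists_walk {a b : V} (h : Relation.ReflTransGen E a b) :
    ∃ l, IsWalk E a l ∧ (a :: l).getLast (List.cons_ne_nil _ _) = b := by
  induction h using Relation.ReflTransGen.head_induction_on with
  | refl => exact ⟨[], trivial, rfl⟩
  | head h' _ ih =>
    obtain ⟨l, hw, hend⟩ := ih
    refine ⟨_ :: l, ⟨h', hw⟩, ?_⟩
    rw [List.getLast_cons (List.cons_ne_nil _ _)]
    exact hend

lemma zip_mem_E : ∀ (l : List V) (a : V), IsWalk E a l →
    ∀ p ∈ (a :: l).zip l, E p.1 p.2 := by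
  intro l
  induction l with
  | nil => intro a _ p hp; simp at hp
  | cons b t ih =>
    intro a hw p hp
    rw [List.zip_cons_cons] at hp
    rcases List.mem_cons.1 hp with rfl | h
    · exact hw.1
    · exact ih b hw.2 p h

lemma zip_nodup : ∀ (l : List V) (a : V), l.Nodup → ((a :: l).zip l).Nodup := by
  intro l
  induction l with
  | nil => intro a _; simp
  | cons b t ih =>
    intro a h
    rw [List.zip_cons_cons, List.nodup_cons]
    constructor
    · intro hmem
      exact (List.nodup_cons.1 h).1 (List.of_mem_zip hmem).2
    · exact ih b (List.nodup_cons.1 h).2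

lemma zip_parent_unique : ∀ (l : List V) (a : V), (a :: l).Nodup →
    ∀ p q w, (p, w) ∈ (a :: l).zip l → (q, w) ∈ (a :: l).zip l → p = q := by
  intro l
  induction l with
  | nil => intro a _ p q w hp _; simp at hp
  | cons b t ih =>
    intro a h p q w hp hq
    rw [List.zip_cons_cons, List.mem_cons] at hp hq
    have hbt : b ∉ t := (List.nodup_cons.1 (List.nodup_cons.1 h).2).1
    rcases hp with hp | hp <;> rcases hq with hq | hq
    · rw [Prod.mk.injEq] at hp hq
      rw [hp.1, hq.1]
    · obtain ⟨rfl, rfl⟩ := Prod.mk.injEq .. ▸ hp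
      exact absurd (List.of_mem_zip hq).2 hbt
    · obtain ⟨rfl, rfl⟩ := Prod.mk.injEq .. ▸ hq
      exact absurd (List.of_mem_zip hp).2 hbt
    · exact ih b (List.nodup_cons.1 h).2 p q w hp hq

lemma walkCost_eq : ∀ (l : List V) (a : V),
    walkCost e a l = (((a :: l).zip l).map (fun p => e p.1 p.2)).sum := by
  intro l
  induction l with
  | nil => intro a; rfl
  | cons b t ih =>
    intro a
    rw [List.zip_cons_cons, List.map_cons, List.sum_cons, ← ih b]
    rfl

lemma reach_chain {T : Set (V × V)} : ∀ (l : List V) (a : V),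
    (∀ p ∈ (a :: l).zip l, p ∈ T) → ∀ w ∈ a :: l, reach T a w := by
  intro l
  induction l with
  | nil =>
    intro a _ w hw
    rw [List.mem_singleton] at hw
    subst hw
    exact Relation.ReflTransGen.refl
  | cons b t ih =>
    intro a hsub w hw
    rcases List.mem_cons.1 hw with rfl | hw'
    · exact Relation.ReflTransGen.refl
    · have h1 : ((a, b) : V × V) ∈ T := by
        apply hsub
        rw [List.zip_cons_cons]
        exact List.mem_cons_self
      have h2 := ih b (fun p hp => hsub p (by rw [List.zip_cons_cons]; exact List.mem_cons_of_mem _ hp)) w hw'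
      exact Relation.ReflTransGen.head h1 h2

lemma reach_dest {T : Set (V × V)} {a b : V} (h : reach T a b) :
    b = a ∨ ∃ c, (c, b) ∈ T := by
  rcases Relation.ReflTransGen.cases_tail h with h | ⟨c, _, hc⟩
  · left; exact h
  · right; exact ⟨c, hc⟩

lemma maxBelow_nonneg {T : Set (V × V)} {S : Set V} {x : V → ℝ}
    (hx0 : ∀ d ∈ S, 0 ≤ x d) (w : V) : 0 ≤ maxBelow T S x w :=
  Real.sSup_nonneg (by rintro y ⟨d, ⟨hdS, _⟩, rfl⟩; exact hx0 d hdS)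

lemma maxBelow_le_of_le {T : Set (V × V)} {S : Set V} {x : V → ℝ} {M : ℝ} {w : V}
    (hM : ∀ d ∈ S, x d ≤ M) (hM0 : 0 ≤ M) : maxBelow T S x w ≤ M :=
  Real.sSup_le (by rintro y ⟨d, ⟨hdS, _⟩, rfl⟩; exact hM d hdS) hM0

lemma maxBelow_mono {T1 T2 : Set (V × V)} {S : Set V} {x : V → ℝ} {w : V}
    (hx0 : ∀ d ∈ S, 0 ≤ x d)
    (hbdd : BddAbove (x '' {d ∈ S | reach T2 w d}))
    (hsub : ∀ d ∈ S, reach T1 w d → reach T2 w d) :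
    maxBelow T1 S x w ≤ maxBelow T2 S x w := by
  apply Real.sSup_le _ (maxBelow_nonneg hx0 w)
  rintro y ⟨d, ⟨hdS, hr⟩, rfl⟩
  exact le_csSup hbdd ⟨d, ⟨hdS, hsub d hdS hr⟩, rfl⟩

lemma finite_of_spans {S : Set V} {u : V} (T : Finset (V × V))
    (hsp : Spans (↑T) u S) : S.Finite := by
  apply Set.Finite.subset (((T.image Prod.snd).finite_toSet).insert u)
  intro d hd
  rcases reach_dest (hsp d hd) with rfl | ⟨c, hc⟩
  · exact Set.mem_insert _ _
  · apply Set.mem_insert_of_mem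
    rw [Finset.mem_coe] at hc ⊢
    exact Finset.mem_image.2 ⟨(c, d), hc, rfl⟩

lemma treeCost_nonneg {x : V → ℝ} {S : Set V} (T : Finset (V × V))
    (hed : ∀ p ∈ T, 0 ≤ e p.1 p.2) (hx0 : ∀ d ∈ S, 0 ≤ x d) :
    0 ≤ treeCost e x S T :=
  Finset.sum_nonneg fun p hp => mul_nonneg (hed p hp) (maxBelow_nonneg hx0 _)

end Aux

lemma combine {E : V → V → Prop} (e : V → V → ℝ) (hepos : ∀ i j, E i j → 0 < e i j)
    (S : Set V) (x : V → ℝ) (hx0 : ∀ d ∈ S, 0 ≤ x d) (M : ℝ)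
    (hM : ∀ d ∈ S, x d ≤ M) (hM0 : 0 ≤ M)
    (v u : V) (l : List V) (hw : IsWalk E v l)
    (hend : (v :: l).getLast (List.cons_ne_nil _ _) = u) (hnd : (v :: l).Nodup)
    (T : Finset (V × V)) (hT : IsRootedTree E u ↑T) (hsp : Spans (↑T) u S) :
    ∃ T' : Finset (V × V), IsRootedTree E v ↑T' ∧ Spans (↑T') v S ∧
      treeCost e x S T' ≤ walkCost e v l * M + treeCost e x S T := by
  classical
  set P : List (V × V) := (v :: l).zip l with hPdef
  set F : Finset (V × V) := T.filter (fun p => p.2 ∉ (v :: l)) with hFdef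
  set U : Finset (V × V) := P.toFinset ∪ F with hUdef
  have hmem : ∀ p : V × V, p ∈ U ↔ p ∈ P ∨ (p ∈ T ∧ p.2 ∉ (v :: l)) := by
    intro p
    rw [hUdef, Finset.mem_union, List.mem_toFinset, hFdef, Finset.mem_filter]
  have hPsnd : ∀ p ∈ P, p.2 ∈ (v :: l) := by
    rintro ⟨p1, p2⟩ hp
    exact List.mem_cons_of_mem _ (List.of_mem_zip hp).2
  have hPfst : ∀ p ∈ P, p.1 ∈ (v :: l) := by
    rintro ⟨p1, p2⟩ hp
    exact (List.of_mem_zip hp).1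
  have hu : u ∈ (v :: l) := hend ▸ List.getLast_mem (List.cons_ne_nil v l)
  have hreachP : ∀ w ∈ (v :: l), reach (↑U) v w := by
    intro w hw'
    exact reach_chain l v
      (fun p hp => Finset.mem_coe.2 ((hmem p).2 (Or.inl hp))) w hw'
  have hdown : ∀ d b, reach (↑U) b d → b ∉ (v :: l) → reach (↑T) b d := by
    intro d b hr
    induction hr using Relation.ReflTransGen.head_induction_on with
    | refl => intro _; exact Relation.ReflTransGen.refl
    | head h' h ih =>
      rename_i a c
      intro ha
      rcases (hmem (a, c)).1 (Finset.mem_coe.1 h') with hpz | ⟨hT1, hc⟩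
      · exact absurd (hPfst _ hpz) ha
      · exact Relation.ReflTransGen.head (Finset.mem_coe.2 hT1) (ih hc)
  have hup : ∀ d w, reach (↑T) w d → reach (↑U) v w → reach (↑U) v d := by
    intro d w hr
    induction hr using Relation.ReflTransGen.head_induction_on with
    | refl => exact id
    | head h' h ih =>
      rename_i a c
      intro hva
      have hac : (a, c) ∈ T := Finset.mem_coe.1 h'
      have hvc : reach (↑U) v c := by
        by_cases hc : c ∈ (v :: l)
        · exact hreachP c hc
        · exact hva.tail (Finset.mem_coe.2 ((hmem (a, c)).2 (Or.inr ⟨hac, hc⟩)))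
      exact ih hvc
  have htree : IsRootedTree E v ↑U := by
    constructor
    · intro p hp
      rcases (hmem p).1 (Finset.mem_coe.1 hp) with h | ⟨h, _⟩
      · exact zip_mem_E l v hw p h
      · exact hT.edges p (Finset.mem_coe.2 h)
    · intro a a' w ha ha'
      rcases (hmem (a, w)).1 (Finset.mem_coe.1 ha) with h1 | ⟨h1, hw1⟩ <;>
        rcases (hmem (a', w)).1 (Finset.mem_coe.1 ha') with h2 | ⟨h2, hw2⟩
      · exact zip_parent_unique l v hnd a a' w h1 h2
      · exact absurd (hPsnd _ h1) hw2
      · exact absurd (hPsnd _ h2) hw1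
      · exact hT.parent_unique a a' w (Finset.mem_coe.2 h1) (Finset.mem_coe.2 h2)
    · intro a ha
      rcases (hmem (a, v)).1 (Finset.mem_coe.1 ha) with h | ⟨_, hv2⟩
      · exact (List.nodup_cons.1 hnd).1 (List.of_mem_zip h).2
      · exact hv2 (List.mem_cons_self)
    · intro p hp
      rcases (hmem p).1 (Finset.mem_coe.1 hp) with h | ⟨h, _⟩
      · exact hreachP p.1 (hPfst p h)
      · exact hup p.1 u (hT.reach_root p (Finset.mem_coe.2 h)) (hreachP u hu)
  have hspan : Spans (↑U) v S := fun d hd => hup d u (hsp d hd) (hreachP u hu)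
  refine ⟨U, htree, hspan, ?_⟩
  have hS_fin : S.Finite := finite_of_spans T hsp
  have hdisj : Disjoint P.toFinset F := by
    rw [Finset.disjoint_left]
    intro p hp hpF
    exact ((Finset.mem_filter.1 hpF).2) (hPsnd p (List.mem_toFinset.1 hp))
  have hsplit : treeCost e x S U =
      (∑ p ∈ P.toFinset, e p.1 p.2 * maxBelow (↑U) S x p.2) +
      (∑ p ∈ F, e p.1 p.2 * maxBelow (↑U) S x p.2) := by
    rw [show treeCost e x S U = ∑ p ∈ P.toFinset ∪ F,
        e p.1 p.2 * maxBelow (↑U) S x p.2 from by rw [← hUdef]; rfl]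
    exact Finset.sum_union hdisj
  have hb1 : (∑ p ∈ P.toFinset, e p.1 p.2 * maxBelow (↑U) S x p.2) ≤
      walkCost e v l * M := by
    calc (∑ p ∈ P.toFinset, e p.1 p.2 * maxBelow (↑U) S x p.2)
        ≤ ∑ p ∈ P.toFinset, e p.1 p.2 * M := by
          apply Finset.sum_le_sum
          intro p hp
          exact mul_le_mul_of_nonneg_left (maxBelow_le_of_le hM hM0)
            (hepos _ _ (zip_mem_E l v hw p (List.mem_toFinset.1 hp))).le
      _ = (∑ p ∈ P.toFinset, e p.1 p.2) * M := by rw [Finset.sum_mul]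
      _ = walkCost e v l * M := by
          rw [List.sum_toFinset _ (zip_nodup l v (List.nodup_cons.1 hnd).2),
            ← walkCost_eq]
  have hb2 : (∑ p ∈ F, e p.1 p.2 * maxBelow (↑U) S x p.2) ≤ treeCost e x S T := by
    calc (∑ p ∈ F, e p.1 p.2 * maxBelow (↑U) S x p.2)
        ≤ ∑ p ∈ F, e p.1 p.2 * maxBelow (↑T) S x p.2 := by
          apply Finset.sum_le_sum
          intro p hp
          obtain ⟨hpT, hp2⟩ := Finset.mem_filter.1 hp
          apply mul_le_mul_of_nonneg_left _
            (hepos _ _ (hT.edges p (Finset.mem_coe.2 hpT))).le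
          apply maxBelow_mono hx0
          · exact BddAbove.mono (Set.image_mono (fun d hd => hd.1))
              ((hS_fin.image x).bddAbove)
          · intro d hd hr
            exact hdown d p.2 hr hp2
      _ ≤ ∑ p ∈ T, e p.1 p.2 * maxBelow (↑T) S x p.2 := by
          apply Finset.sum_le_sum_of_subset_of_nonneg (Finset.filter_subset _ _)
          intro p hp _
          exact mul_nonneg (hepos _ _ (hT.edges p (Finset.mem_coe.2 hp))).le
            (maxBelow_nonneg hx0 _)
      _ = treeCost e x S T := rfl
  rw [hsplit]
  linarith

open Pointwise

/-- triangle-type inequality for the Steiner-flow cost along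
shortest paths: `δ(v,S) ≤ dist(v,u) · max_{d∈S} x d + δ(u,S)`. -/
theorem stmt13 (E : V → V → Prop) (hE : ∀ a b, E a b → E b a)
    (hconn : ∀ a b : V, Relation.ReflTransGen E a b)
    (e : V → V → ℝ) (hepos : ∀ i j, E i j → 0 < e i j)
    (S : Set V) (hS : S.Nonempty) (x : V → ℝ) (hx : ∀ d ∈ S, 0 < x d) :
    ∀ v u : V, delta E e x v S ≤ dist E e v u * sSup (x '' S) + delta E e x u S := by
  intro v u
  classical
  set M : ℝ := sSup (x '' S) with hMdef
  have hx0 : ∀ d ∈ S, 0 ≤ x d := fun d hd => (hx d hd).le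
  have he0 : ∀ i j, E i j → 0 ≤ e i j := fun i j h => (hepos i j h).le
  set Av : Set ℝ := {c | ∃ T : Finset (V × V),
    IsRootedTree E v ↑T ∧ Spans (↑T) v S ∧ c = treeCost e x S T} with hAvdef
  set Au : Set ℝ := {c | ∃ T : Finset (V × V),
    IsRootedTree E u ↑T ∧ Spans (↑T) u S ∧ c = treeCost e x S T} with hAudef
  set Dset : Set ℝ := {c | ∃ l : List V, IsWalk E v l ∧
    (v :: l).getLast (List.cons_ne_nil v l) = u ∧ c = walkCost e v l} with hDdef
  have hdv : delta E e x v S = sInf Av := rfl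
  have hdu : delta E e x u S = sInf Au := rfl
  have hdd : dist E e v u = sInf Dset := rfl
  have hAv0 : ∀ c ∈ Av, 0 ≤ c := by
    rintro c ⟨T, hT, _, rfl⟩
    exact treeCost_nonneg T (fun p hp => he0 _ _ (hT.edges p (Finset.mem_coe.2 hp))) hx0
  have hAu0 : ∀ c ∈ Au, 0 ≤ c := by
    rintro c ⟨T, hT, _, rfl⟩
    exact treeCost_nonneg T (fun p hp => he0 _ _ (hT.edges p (Finset.mem_coe.2 hp))) hx0
  have hD0 : ∀ c ∈ Dset, 0 ≤ c := by
    rintro c ⟨l, hwl, _, rfl⟩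
    exact walkCost_nonneg he0 l v hwl
  have hM0 : 0 ≤ M := Real.sSup_nonneg (by rintro y ⟨d, hd, rfl⟩; exact hx0 d hd)
  have hdist0 : 0 ≤ dist E e v u := by rw [hdd]; exact Real.sInf_nonneg hD0
  by_cases hAvne : Av.Nonempty
  · obtain ⟨c0, T0, hT0, hsp0, _⟩ := hAvne
    have hSfin : S.Finite := finite_of_spans T0 hsp0
    have hbdd : BddAbove (x '' S) := (hSfin.image x).bddAbove
    have hM : ∀ d ∈ S, x d ≤ M := fun d hd => le_csSup hbdd ⟨d, hd, rfl⟩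
    have hAune : Au.Nonempty := by
      obtain ⟨l0, hw0, hend0⟩ := exists_walk (hconn u v)
      obtain ⟨l1, hw1, hend1, hnd1, _, _⟩ :=
        exists_nodup_walk he0 l0.length u l0 le_rfl hw0
      obtain ⟨T1, hT1, hsp1, _⟩ := combine e hepos S x hx0 M hM hM0 u v l1 hw1
        (hend1.trans hend0) hnd1 T0 hT0 hsp0
      exact ⟨treeCost e x S T1, T1, hT1, hsp1, rfl⟩
    have hDne : Dset.Nonempty := by
      obtain ⟨l0, hw0, hend0⟩ := exists_walk (hconn v u)
      exact ⟨walkCost e v l0, l0, hw0, hend0, rfl⟩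
    have key : ∀ c ∈ Dset, ∀ c' ∈ Au, delta E e x v S ≤ c * M + c' := by
      rintro c ⟨lc, hwc, hendc, rfl⟩ c' ⟨Tc, hTc, hspc, rfl⟩
      obtain ⟨l1, hw1, hend1, hnd1, _, hcost1⟩ :=
        exists_nodup_walk he0 lc.length v lc le_rfl hwc
      obtain ⟨T', hT', hsp', hcost'⟩ := combine e hepos S x hx0 M hM hM0 v u l1 hw1
        (hend1.trans hendc) hnd1 Tc hTc hspc
      have hmem' : treeCost e x S T' ∈ Av := ⟨T', hT', hsp', rfl⟩
      have h1 : delta E e x v S ≤ treeCost e x S T' := by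
        rw [hdv]
        exact csInf_le ⟨0, fun c hc => hAv0 c hc⟩ hmem'
      have h2 : walkCost e v l1 * M ≤ walkCost e v lc * M :=
        mul_le_mul_of_nonneg_right hcost1 hM0
      linarith
    have h1 : ∀ c' ∈ Au, delta E e x v S ≤ dist E e v u * M + c' := by
      intro c' hc'
      have hsmul : sInf (M • Dset) = M * sInf Dset := by
        rw [Real.sInf_smul_of_nonneg hM0, smul_eq_mul]
      have hle : delta E e x v S - c' ≤ sInf (M • Dset) := by
        apply le_csInf (hDne.smul_set)
        rintro y ⟨c, hc, rfl⟩
        have := key c hc c' hc'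
        simp only [smul_eq_mul]
        linarith
      rw [hsmul] at hle
      rw [hdd]
      linarith
    have h2 : delta E e x v S - dist E e v u * M ≤ sInf Au := by
      apply le_csInf hAune
      intro c' hc'
      linarith [h1 c' hc']
    rw [hdu] at *
    linarith
  · have hempty : Av = ∅ := Set.not_nonempty_iff_eq_empty.1 hAvne
    rw [hdv, hempty, Real.sInf_empty]
    have : 0 ≤ sInf Au := Real.sInf_nonneg hAu0
    rw [hdu]
    exact add_nonneg (mul_nonneg hdist0 hM0) this

end OST
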